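/- Let (X,d) be a metric space. The Hausdorff distance on the collection B[X] of all nonempty closed bounded subsets of X has intrinsic metric — i.e., for all M, W ∈ B[X] and every ε > 0 there exist M₀ = M, M₁, …, M_k = W in B[X] with hausdorffDist(M_i, M_{i+1}) < ε for every i < k and the sum of the hausdorffDist(M_i, M_{i+1}) less than hausdorffDist(M,W) + ε — if and only if (X,d) has intrinsic metric. -/

import Mathlib

open Metric Bornology

private lemma chain_partial_dist {X : Type*} [MetricSpace X] (z : ℕ → X) :
    ∀ a b : ℕ, a ≤ b →
      dist (z a) (z b) ≤ (∑ i ∈ Finset.range b, dist (z i) (z (i+1)))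
        - ∑ i ∈ Finset.range a, dist (z i) (z (i+1)) := by
  intro a b hab
  induction b, hab using Nat.le_induction with
  | base => simp
  | succ b hab ih =>
    rw [Finset.sum_range_succ]
    calc dist (z a) (z (b+1)) ≤ dist (z a) (z b) + dist (z b) (z (b+1)) := dist_triangle _ _ _
    _ ≤ _ := by linarith

private lemma path_discretize {X : Type*} [MetricSpace X] (z : ℕ → X) (k n : ℕ) (hn : 0 < n)
    {η : ℝ} (hη : 0 < η) (hstep : ∀ i < k, dist (z i) (z (i+1)) < η) :
    ∃ p : ℕ → X, p 0 = z 0 ∧ p n = z k ∧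
      ∀ j < n, dist (p j) (p (j+1)) ≤ (∑ i ∈ Finset.range k, dist (z i) (z (i+1))) / n + η := by
  classical
  let S : ℕ → ℝ := fun j => ∑ i ∈ Finset.range j, dist (z i) (z (i+1))
  let L : ℝ := S k
  have hS0 : S 0 = 0 := by simp [S]
  have hSmono : ∀ a b : ℕ, a ≤ b → S a ≤ S b := by
    intro a b hab
    exact Finset.sum_le_sum_of_subset_of_nonneg (Finset.range_subset_range.2 hab)
      (fun i _ _ => dist_nonneg)
  have hpartial : ∀ a b : ℕ, a ≤ b → dist (z a) (z b) ≤ S b - S a :=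
    chain_partial_dist z
  have hL0 : 0 ≤ L := by rw [← hS0]; exact hSmono 0 k (Nat.zero_le _)
  have hn' : (0:ℝ) < n := by exact_mod_cast hn
  let m : ℕ → ℕ := fun j => Nat.findGreatest (fun i => S i ≤ j * L / n) k
  have hthr : ∀ j : ℕ, (0:ℝ) ≤ j * L / n := by intro j; positivity
  have hSm : ∀ j, S (m j) ≤ j * L / n := by
    intro j
    exact Nat.findGreatest_spec (P := fun i => S i ≤ j * L / n) (Nat.zero_le k)
      (by show S 0 ≤ _; rw [hS0]; exact hthr j)
  have hmk : ∀ j, m j ≤ k := fun j => Nat.findGreatest_le k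
  refine ⟨fun j => z (m j), ?_, ?_, ?_⟩
  · show z (m 0) = z 0
    have h1 : dist (z 0) (z (m 0)) ≤ 0 := by
      have h2 := hSm 0
      simp only [Nat.cast_zero, zero_mul, zero_div] at h2
      have := hpartial 0 (m 0) (Nat.zero_le _)
      rw [hS0] at this
      linarith
    rw [dist_comm] at h1
    exact (eq_of_dist_eq_zero (le_antisymm h1 dist_nonneg))
  · show z (m n) = z k
    have hmn : m n = k := by
      refine le_antisymm (hmk n) (Nat.le_findGreatest le_rfl ?_)
      show S k ≤ (n:ℝ) * L / n
      have : (n:ℝ) * L / n = L := by field_simp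
      rw [this]
    rw [hmn]
  · intro j hj
    show dist (z (m j)) (z (m (j+1))) ≤ L / n + η
    have hmono : m j ≤ m (j+1) := by
      refine Nat.findGreatest_mono (fun i hi => le_trans hi ?_) le_rfl
      push_cast
      have h1 : (j:ℝ) * L ≤ ((j:ℝ)+1) * L := by nlinarith
      exact div_le_div_of_nonneg_right h1 (le_of_lt hn') |>.trans_eq rfl
    rcases eq_or_lt_of_le (hmk j) with hjk | hjk
    · have : m (j+1) = k := le_antisymm (hmk (j+1)) (hjk ▸ hmono)
      rw [hjk, this]
      simp only [dist_self]
      positivity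
    · -- m j < k
      have hnot : ¬ (S (m j + 1) ≤ j * L / n) :=
        Nat.findGreatest_is_greatest (Nat.lt_succ_self _) hjk
      push_neg at hnot
      have hstep' : S (m j + 1) - S (m j) < η := by
        have : S (m j + 1) = S (m j) + dist (z (m j)) (z (m j + 1)) :=
          Finset.sum_range_succ _ _
        have := hstep (m j) hjk
        linarith [Finset.sum_range_succ (fun i => dist (z i) (z (i+1))) (m j),
          hstep (m j) hjk]
      have hlow : (j:ℝ) * L / n - η < S (m j) := by linarith
      have hup : S (m (j+1)) ≤ ((j:ℝ)+1) * L / n := by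
        have := hSm (j+1); push_cast at this; exact this
      have hd := hpartial (m j) (m (j+1)) hmono
      have : ((j:ℝ)+1) * L / n - ((j:ℝ) * L / n - η) = L / n + η := by ring
      linarith


/-- The Hausdorff metric on the collection of nonempty closed bounded subsets of `X`
is intrinsic iff the metric of `X` is intrinsic. -/
theorem hausdorff_intrinsic_iff_intrinsic {X : Type*} [MetricSpace X] :
    (∀ M W : Set X, M.Nonempty → IsClosed M → IsBounded M →
      W.Nonempty → IsClosed W → IsBounded W →
      ∀ ε > (0 : ℝ), ∃ (k : ℕ) (A : ℕ → Set X),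
        A 0 = M ∧ A k = W ∧
        (∀ i ≤ k, (A i).Nonempty ∧ IsClosed (A i) ∧ IsBounded (A i)) ∧
        (∀ i < k, hausdorffDist (A i) (A (i + 1)) < ε) ∧
        (∑ i ∈ Finset.range k, hausdorffDist (A i) (A (i + 1))) <
          hausdorffDist M W + ε) ↔
    (∀ x y : X, ∀ ε > (0 : ℝ), ∃ (k : ℕ) (z : ℕ → X), z 0 = x ∧ z k = y ∧
      (∀ i < k, dist (z i) (z (i + 1)) < ε) ∧
      (∑ i ∈ Finset.range k, dist (z i) (z (i + 1))) < dist x y + ε) := by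
  constructor
  · intro H
    classical
    intro x y ε hε
    obtain ⟨k, A, hA0, hAk, hprops, hhd, hhdsum⟩ :=
      H {x} {y} (Set.singleton_nonempty x) isClosed_singleton isBounded_singleton
        (Set.singleton_nonempty y) isClosed_singleton isBounded_singleton
        (ε/2) (half_pos hε)
    rcases Nat.eq_zero_or_pos k with hk0 | hkpos
    · subst hk0
      have hxy : x = y := by
        rw [hA0] at hAk
        exact (Set.singleton_eq_singleton_iff.1 hAk)
      refine ⟨0, fun _ => x, rfl, hxy, by omega, ?_⟩
      simp only [Finset.range_zero, Finset.sum_empty]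
      have := dist_nonneg (x := x) (y := y)
      linarith
    · set δ : ℝ := ε/(2*(k+1)) with hδdef
      have hδ : 0 < δ := by positivity
      have hδle : δ ≤ ε/2 := by
        rw [hδdef, div_le_div_iff₀ (by positivity) (by norm_num)]
        nlinarith [Nat.cast_nonneg (α := ℝ) k]
      have next : ∀ i < k, ∀ v ∈ A i, ∃ u, u ∈ A (i+1) ∧
          dist v u < hausdorffDist (A i) (A (i + 1)) + δ := by
        intro i hi v hv
        obtain ⟨hne, _, hb⟩ := hprops i hi.le
        obtain ⟨hne', _, hb'⟩ := hprops (i+1) hi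
        have hfin : EMetric.hausdorffEdist (A i) (A (i+1)) ≠ ⊤ :=
          hausdorffEdist_ne_top_of_nonempty_of_bounded hne hne' hb hb'
        have h1 : infDist v (A (i+1)) < hausdorffDist (A i) (A (i+1)) + δ :=
          lt_of_le_of_lt (infDist_le_hausdorffDist_of_mem hv hfin)
            (lt_add_of_pos_right _ hδ)
        obtain ⟨u, hu, hdu⟩ := (infDist_lt_iff hne').1 h1
        exact ⟨u, hu, hdu⟩
      let z : ℕ → X := fun j => Nat.rec x (fun i zi =>
        if h : ∃ u, u ∈ A (i+1) ∧ dist zi u < hausdorffDist (A i) (A (i + 1)) + δ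
        then h.choose else zi) j
      have hz0 : z 0 = x := rfl
      have hzsucc : ∀ i, z (i+1) =
          (if h : ∃ u, u ∈ A (i+1) ∧ dist (z i) u < hausdorffDist (A i) (A (i + 1)) + δ
          then h.choose else z i) := fun i => rfl
      have hmem : ∀ i, i ≤ k → z i ∈ A i := by
        intro i
        induction i with
        | zero => intro _; rw [hz0, hA0]; exact Set.mem_singleton x
        | succ i ih =>
          intro hik
          have hi : i < k := hik
          have hzi := ih hi.le
          have hex := next i hi (z i) hzi
          rw [hzsucc i, dif_pos hex]
          exact hex.choose_spec.1
      have hdstep : ∀ i < k, dist (z i) (z (i+1)) <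
          hausdorffDist (A i) (A (i + 1)) + δ := by
        intro i hi
        have hex := next i hi (z i) (hmem i hi.le)
        rw [hzsucc i, dif_pos hex]
        exact hex.choose_spec.2
      have hzk : z k = y := by
        have := hmem k le_rfl
        rw [hAk] at this
        exact this
      have hdxy : hausdorffDist ({x} : Set X) {y} ≤ dist x y := by
        refine hausdorffDist_le_of_mem_dist dist_nonneg ?_ ?_
        · intro a ha; rw [Set.mem_singleton_iff] at ha; subst ha
          exact ⟨y, Set.mem_singleton y, le_rfl⟩
        · intro a ha; rw [Set.mem_singleton_iff] at ha; subst ha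
          exact ⟨x, Set.mem_singleton x, by rw [dist_comm]⟩
      refine ⟨k, z, hz0, hzk, ?_, ?_⟩
      · intro i hi
        have h1 := hdstep i hi
        have h2 := hhd i hi
        linarith
      · have hsum1 : (∑ i ∈ Finset.range k, dist (z i) (z (i+1))) <
            ∑ i ∈ Finset.range k, (hausdorffDist (A i) (A (i + 1)) + δ) := by
          refine Finset.sum_lt_sum_of_nonempty ?_ ?_
          · exact Finset.nonempty_range_iff.2 (Nat.pos_iff_ne_zero.1 hkpos)
          · intro i hi
            exact hdstep i (Finset.mem_range.1 hi)
        rw [Finset.sum_add_distrib, Finset.sum_const, Finset.card_range,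
          nsmul_eq_mul] at hsum1
        have hkδ : (k:ℝ) * δ ≤ ε/2 := by
          rw [hδdef, mul_div_assoc', div_le_div_iff₀ (by positivity) (by norm_num)]
          nlinarith [Nat.cast_nonneg (α := ℝ) k]
        linarith
  · intro hX
    classical
    intro M W hMne hMcl hMb hWne hWcl hWb ε hε
    set D : ℝ := hausdorffDist M W with hDdef
    have hD0 : 0 ≤ D := hausdorffDist_nonneg
    set ε' : ℝ := ε/8 with hε'def
    have hε' : 0 < ε' := by positivity
    have hfin : EMetric.hausdorffEdist M W ≠ ⊤ :=
      hausdorffEdist_ne_top_of_nonempty_of_bounded hMne hWne hMb hWb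
    have hfin' : EMetric.hausdorffEdist W M ≠ ⊤ := by
      rwa [EMetric.hausdorffEdist, hausdorffEDist_comm]
    obtain ⟨n, hngt⟩ := exists_nat_gt ((D + 2*ε')/ε')
    have hnpos : 0 < n := by
      have h1 : (0:ℝ) < (D + 2*ε')/ε' := by positivity
      exact_mod_cast Nat.pos_of_ne_zero (by rintro rfl; push_cast at hngt; linarith)
    have hn' : (0:ℝ) < n := by exact_mod_cast hnpos
    have hdiv : (D + 2*ε')/n < ε' := by
      rw [div_lt_iff₀ hn']
      rw [div_lt_iff₀ hε'] at hngt
      linarith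
    set η : ℝ := ε'/n with hηdef
    have hη : 0 < η := by positivity
    have hηε' : η ≤ ε' := by
      rw [hηdef]
      exact div_le_self hε'.le (by exact_mod_cast hnpos)
    set ρ : ℝ := (D + 2*ε')/n + η with hρdef
    have hρ0 : 0 ≤ ρ := by positivity
    have hρε : ρ < ε := by
      have hstep1 : ρ < ε' + ε' := by
        rw [hρdef]
        linarith [hdiv, hηε']
      have hstep2 : ε' + ε' < ε := by
        rw [hε'def]
        linarith
      linarith
    -- the key construction: a ρ-Lipschitz-in-j family of "paths" through every point of M ∪ W
    have key : ∀ v : X, v ∈ M ∨ v ∈ W → ∃ p : ℕ → X, p 0 ∈ M ∧ p n ∈ W ∧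
        (v ∈ M → p 0 = v) ∧ (v ∈ W → p n = v) ∧
        ∀ j < n, dist (p j) (p (j+1)) ≤ ρ := by
      intro v hv
      by_cases hvM : v ∈ M
      · by_cases hvW : v ∈ W
        · exact ⟨fun _ => v, hvM, hvW, fun _ => rfl, fun _ => rfl,
            fun j _ => by simp [hρ0]⟩
        · -- forward path from v ∈ M toward W
          have h1 : infDist v W < D + ε' :=
            lt_of_le_of_lt (infDist_le_hausdorffDist_of_mem hvM hfin)
              (lt_add_of_pos_right _ hε')
          obtain ⟨w, hwW, hvw⟩ := (infDist_lt_iff hWne).1 h1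
          obtain ⟨k', zc, hz0, hzk, hzstep, hzsum⟩ := hX v w η hη
          obtain ⟨p, hp0, hpn, hpstep⟩ := path_discretize zc k' n hnpos hη hzstep
          refine ⟨p, ?_, ?_, fun _ => by rw [hp0, hz0], fun hc => absurd hc hvW, ?_⟩
          · rw [hp0, hz0]; exact hvM
          · rw [hpn, hzk]; exact hwW
          · intro j hj
            refine le_trans (hpstep j hj) ?_
            have hsum : (∑ i ∈ Finset.range k', dist (zc i) (zc (i+1))) ≤ D + 2*ε' := by
              have : dist v w + η < D + ε' + ε' := by linarith
              linarith
            rw [hρdef]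
            gcongr
      · -- v ∈ W; reversed path
        have hvW : v ∈ W := hv.resolve_left hvM
        have h1 : infDist v M < D + ε' := by
          have : infDist v M ≤ hausdorffDist W M := infDist_le_hausdorffDist_of_mem hvW hfin'
          rw [hausdorffDist_comm] at this
          exact lt_of_le_of_lt this (lt_add_of_pos_right _ hε')
        obtain ⟨u, huM, hvu⟩ := (infDist_lt_iff hMne).1 h1
        obtain ⟨k', zc, hz0, hzk, hzstep, hzsum⟩ := hX v u η hη
        obtain ⟨p, hp0, hpn, hpstep⟩ := path_discretize zc k' n hnpos hη hzstep
        refine ⟨fun j => p (n - j), ?_, ?_, fun hc => absurd hc hvM, ?_, ?_⟩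
        · show p (n - 0) ∈ M
          rw [Nat.sub_zero, hpn, hzk]; exact huM
        · show p (n - n) ∈ W
          rw [Nat.sub_self, hp0, hz0]; exact hvW
        · intro _
          show p (n - n) = v
          rw [Nat.sub_self, hp0, hz0]
        · intro j hj
          show dist (p (n - j)) (p (n - (j+1))) ≤ ρ
          have he : n - j = (n - (j+1)) + 1 := by omega
          have hlt : n - (j+1) < n := by omega
          rw [he, dist_comm]
          refine le_trans (hpstep _ hlt) ?_
          have hsum : (∑ i ∈ Finset.range k', dist (zc i) (zc (i+1))) ≤ D + 2*ε' := by
            have : dist v u + η < D + ε' + ε' := by linarith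
            linarith
          rw [hρdef]
          gcongr
    choose p hp0 hpn hpM hpW hpstep using key
    set gen : ℕ → Set X := fun j => {u | ∃ v, ∃ h : v ∈ M ∨ v ∈ W, u = p v h j} with hgen
    set A : ℕ → Set X := fun j => closure (gen j) with hA
    have hgen0 : gen 0 = M := by
      apply Set.eq_of_subset_of_subset
      · rintro u ⟨v, h, rfl⟩
        exact hp0 v h
      · intro u hu
        exact ⟨u, Or.inl hu, (hpM u (Or.inl hu) hu).symm⟩
    have hgenn : gen n = W := by
      apply Set.eq_of_subset_of_subset
      · rintro u ⟨v, h, rfl⟩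
        exact hpn v h
      · intro u hu
        exact ⟨u, Or.inr hu, (hpW u (Or.inr hu) hu).symm⟩
    -- basic properties
    obtain ⟨x0, hx0⟩ := hMne
    obtain ⟨r0, hr0⟩ := hMb.subset_closedBall x0
    have hgenne : ∀ j, (gen j).Nonempty := by
      intro j
      exact ⟨p x0 (Or.inl hx0) j, x0, Or.inl hx0, rfl⟩
    have hgenbd : ∀ j ≤ n, gen j ⊆ closedBall x0 (n * ρ + r0) := by
      rintro j hj u ⟨v, h, rfl⟩
      have h1 : dist (p v h 0) (p v h j) ≤ j * ρ := by
        refine le_trans (dist_le_range_sum_dist (fun i => p v h i) j) ?_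
        calc (∑ i ∈ Finset.range j, dist (p v h i) (p v h (i+1)))
            ≤ ∑ _i ∈ Finset.range j, ρ := by
              refine Finset.sum_le_sum ?_
              intro i hi
              exact hpstep v h i (lt_of_lt_of_le (Finset.mem_range.1 hi) hj)
          _ = j * ρ := by rw [Finset.sum_const, Finset.card_range, nsmul_eq_mul]
      have h2 : dist (p v h 0) x0 ≤ r0 := hr0 (hp0 v h)
      have h3 : (j:ℝ) * ρ ≤ n * ρ := by
        have : (j:ℝ) ≤ n := by exact_mod_cast hj
        nlinarith
      have h1' : dist (p v h j) (p v h 0) ≤ j * ρ := by rw [dist_comm]; exact h1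
      calc dist (p v h j) x0 ≤ dist (p v h j) (p v h 0) + dist (p v h 0) x0 :=
            dist_triangle _ _ _
        _ ≤ n * ρ + r0 := by linarith
    have hhd : ∀ j < n, hausdorffDist (A j) (A (j+1)) ≤ ρ := by
      intro j hj
      show hausdorffDist (closure (gen j)) (closure (gen (j+1))) ≤ ρ
      rw [hausdorffDist_closure]
      refine hausdorffDist_le_of_mem_dist hρ0 ?_ ?_
      · rintro u ⟨v, h, rfl⟩
        exact ⟨p v h (j+1), ⟨v, h, rfl⟩, hpstep v h j hj⟩
      · rintro u ⟨v, h, rfl⟩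
        exact ⟨p v h j, ⟨v, h, rfl⟩, by rw [dist_comm]; exact hpstep v h j hj⟩
    refine ⟨n, A, ?_, ?_, ?_, ?_, ?_⟩
    · show closure (gen 0) = M
      rw [hgen0, hMcl.closure_eq]
    · show closure (gen n) = W
      rw [hgenn, hWcl.closure_eq]
    · intro i hi
      refine ⟨(hgenne i).closure, isClosed_closure, ?_⟩
      have h1 : closure (gen i) ⊆ closedBall x0 (n * ρ + r0) :=
        closure_minimal (hgenbd i hi) isClosed_closedBall
      exact (isBounded_closedBall).subset h1
    · intro i hi
      exact lt_of_le_of_lt (hhd i hi) hρε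
    · have h1 : (∑ i ∈ Finset.range n, hausdorffDist (A i) (A (i+1))) ≤ n * ρ := by
        calc (∑ i ∈ Finset.range n, hausdorffDist (A i) (A (i+1)))
            ≤ ∑ _i ∈ Finset.range n, ρ := by
              refine Finset.sum_le_sum ?_
              intro i hi
              exact hhd i (Finset.mem_range.1 hi)
          _ = n * ρ := by rw [Finset.sum_const, Finset.card_range, nsmul_eq_mul]
      have h2 : (n:ℝ) * ρ = (D + 2*ε') + ε' := by
        rw [hρdef, hηdef, mul_add, mul_div_cancel₀ _ (ne_of_gt hn'), mul_div_cancel₀ _ (ne_of_gt hn')]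
      have h3 : D + 3*ε' < D + ε := by
        rw [hε'def]; linarith
      linarith
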